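/- Assume γ(t) ≥ 0 for all t ≥ 0, S(0) ≥ 0 and I(0) ≥ 0. Then the following are equivalent: (a) N(0) = 0; (b) S(t) = 0 and I(t) = 0 for all t ≥ 0; (c) N(t) = 0 for all t ≥ 0. -/

import Mathlib

open Set Real

/-- Key lemma: if `S 0 = 0` and `I 0 = 0`, then `S` and `I` vanish on `[0, ∞)`. -/
theorem sis_zero_of_zero_init
    (r d γ β δ1 δ2 p S I : ℝ → ℝ)
    (hrc : Continuous r) (hdc : Continuous d) (hγc : Continuous γ) (hβc : Continuous β)
    (hδ1c : Continuous δ1) (hδ2c : Continuous δ2) (hpc : Continuous p)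
    (hppos : ∀ t : ℝ, 0 ≤ t → 0 < p t)
    (hS : ∀ t : ℝ, 0 ≤ t →
      HasDerivAt S (r t * (1 - (δ1 t * S t + δ2 t * I t) / p t) * S t
        + (γ t - β t * S t) * I t) t)
    (hI : ∀ t : ℝ, 0 ≤ t → HasDerivAt I ((β t * S t - d t - γ t) * I t) t)
    (hS0 : S 0 = 0) (hI0 : I 0 = 0) :
    ∀ t : ℝ, 0 ≤ t → S t = 0 ∧ I t = 0 := by
  intro T hT
  -- work on the interval [0, T]
  set F : ℝ → ℝ × ℝ := fun s => (S s, I s) with hF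
  set F' : ℝ → ℝ × ℝ := fun s =>
    (r s * (1 - (δ1 s * S s + δ2 s * I s) / p s) * S s + (γ s - β s * S s) * I s,
     (β s * S s - d s - γ s) * I s) with hF'
  have hScont : ContinuousOn S (Icc 0 T) := fun s hs =>
    (hS s hs.1).continuousAt.continuousWithinAt
  have hIcont : ContinuousOn I (Icc 0 T) := fun s hs =>
    (hI s hs.1).continuousAt.continuousWithinAt
  have hFcont : ContinuousOn F (Icc 0 T) := hScont.prodMk hIcont
  -- the coefficient functions
  set A : ℝ → ℝ := fun s => r s * (1 - (δ1 s * S s + δ2 s * I s) / p s) with hA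
  set B : ℝ → ℝ := fun s => γ s - β s * S s with hB
  set C : ℝ → ℝ := fun s => β s * S s - d s - γ s with hC
  have hAcont : ContinuousOn A (Icc 0 T) := by
    apply hrc.continuousOn.mul
    apply continuousOn_const.sub
    apply ContinuousOn.div
    · exact ((hδ1c.continuousOn.mul hScont).add (hδ2c.continuousOn.mul hIcont))
    · exact hpc.continuousOn
    · exact fun s hs => (hppos s hs.1).ne'
  have hBcont : ContinuousOn B (Icc 0 T) :=
    hγc.continuousOn.sub (hβc.continuousOn.mul hScont)
  have hCcont : ContinuousOn C (Icc 0 T) :=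
    ((hβc.continuousOn.mul hScont).sub hdc.continuousOn).sub hγc.continuousOn
  set Kf : ℝ → ℝ := fun s => max (|A s| + |B s|) |C s| with hKf
  have hKfcont : ContinuousOn Kf (Icc 0 T) :=
    continuous_max.comp_continuousOn ((hAcont.abs.add hBcont.abs).prodMk hCcont.abs)
  obtain ⟨x, hx, hxmax⟩ := isCompact_Icc.exists_isMaxOn (nonempty_Icc.2 hT) hKfcont
  set K : ℝ := Kf x with hK
  have key : ∀ s ∈ Icc (0:ℝ) T, ‖F s‖ ≤ gronwallBound 0 K 0 (s - 0) := by
    apply norm_le_gronwallBound_of_norm_deriv_right_le hFcont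
    · intro s hs
      exact (((hS s hs.1).prodMk (hI s hs.1)).hasDerivWithinAt : HasDerivWithinAt F (F' s) _ s)
    · simp [hF, hS0, hI0, Prod.norm_def]
    · intro s hs
      have hKs := hxmax ⟨hs.1, hs.2.le⟩
      have hAB : |A s| + |B s| ≤ K := le_trans (le_max_left _ _) hKs
      have hCle : |C s| ≤ K := le_trans (le_max_right _ _) hKs
      have hFn : ‖F s‖ = max |S s| |I s| := by simp [hF, Prod.norm_def]
      have hSle : |S s| ≤ ‖F s‖ := hFn ▸ le_max_left _ _
      have hIle : |I s| ≤ ‖F s‖ := hFn ▸ le_max_right _ _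
      have h1 : |A s * S s + B s * I s| ≤ K * ‖F s‖ := by
        calc |A s * S s + B s * I s| ≤ |A s| * |S s| + |B s| * |I s| := by
              exact (abs_add_le _ _).trans
                (le_of_eq (by rw [abs_mul (A s) (S s), abs_mul (B s) (I s)]))
          _ ≤ |A s| * ‖F s‖ + |B s| * ‖F s‖ :=
              add_le_add (mul_le_mul_of_nonneg_left hSle (abs_nonneg _))
                (mul_le_mul_of_nonneg_left hIle (abs_nonneg _))
          _ = (|A s| + |B s|) * ‖F s‖ := by ring
          _ ≤ K * ‖F s‖ := mul_le_mul_of_nonneg_right hAB (norm_nonneg _)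
      have h2 : |C s * I s| ≤ K * ‖F s‖ := by
        rw [abs_mul (C s) (I s)]
        exact mul_le_mul hCle hIle (abs_nonneg _) (le_trans (abs_nonneg _) hCle)
      have : ‖F' s‖ = max |A s * S s + B s * I s| |C s * I s| := by
        simp only [hF', Prod.norm_def, Real.norm_eq_abs, hA, hB, hC]
      rw [this, add_zero]
      exact max_le h1 h2
  have := key T ⟨hT, le_refl T⟩
  rw [gronwallBound_ε0, zero_mul] at this
  have hFn : ‖F T‖ = max |S T| |I T| := by simp [hF, Prod.norm_def]
  rw [hFn] at this
  constructor
  · exact abs_eq_zero.1 (le_antisymm (le_trans (le_max_left _ _) this) (abs_nonneg _))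
  · exact abs_eq_zero.1 (le_antisymm (le_trans (le_max_right _ _) this) (abs_nonneg _))

/-- In the SIS epidemic model with `γ ≥ 0`, `S(0) ≥ 0`, `I(0) ≥ 0`, the following are
equivalent: (a) `N(0) = 0`; (b) `S(t) = 0` and `I(t) = 0` for all `t ≥ 0`;
(c) `N(t) = 0` for all `t ≥ 0`, where `N = S + I` is the total population. -/
theorem sis_total_population_zero_iff
    (r d γ β δ1 δ2 p S I : ℝ → ℝ)
    (hrc : Continuous r) (hdc : Continuous d) (hγc : Continuous γ) (hβc : Continuous β)
    (hδ1c : Continuous δ1) (hδ2c : Continuous δ2) (hpc : Continuous p)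
    (hppos : ∀ t : ℝ, 0 ≤ t → 0 < p t)
    (hS : ∀ t : ℝ, 0 ≤ t →
      HasDerivAt S (r t * (1 - (δ1 t * S t + δ2 t * I t) / p t) * S t
        + (γ t - β t * S t) * I t) t)
    (hI : ∀ t : ℝ, 0 ≤ t → HasDerivAt I ((β t * S t - d t - γ t) * I t) t)
    (hγpos : ∀ t : ℝ, 0 ≤ t → 0 ≤ γ t)
    (hS0 : 0 ≤ S 0) (hI0 : 0 ≤ I 0) :
    (S 0 + I 0 = 0 ↔ ∀ t : ℝ, 0 ≤ t → S t = 0 ∧ I t = 0) ∧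
    (S 0 + I 0 = 0 ↔ ∀ t : ℝ, 0 ≤ t → S t + I t = 0) := by
  have main : S 0 + I 0 = 0 → ∀ t : ℝ, 0 ≤ t → S t = 0 ∧ I t = 0 := by
    intro h
    have hS0' : S 0 = 0 := by linarith
    have hI0' : I 0 = 0 := by linarith
    exact sis_zero_of_zero_init r d γ β δ1 δ2 p S I hrc hdc hγc hβc hδ1c hδ2c hpc hppos
      hS hI hS0' hI0'
  constructor
  · exact ⟨main, fun h => by have := h 0 le_rfl; linarith [this.1, this.2]⟩
  · constructor
    · intro h t ht
      obtain ⟨h1, h2⟩ := main h t ht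
      rw [h1, h2, add_zero]
    · intro h
      exact h 0 le_rfl
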